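/- Let k ≥ 3 be odd with ℓ = (k-1)/2 even, and let Γ be a k-cycle together with k isolated vertices, on a total of 2k vertices. Then Γ + ℓ decomposes into k cycles of length k, each containing exactly one edge of the k-cycle of Γ. -/

import Mathlib

open SimpleGraph

/-- The graph `H + W`: `H` together with the new vertices of `W`, each adjacent to
every vertex of `H`'s (whole) vertex type. -/
def plusW {V : Type*} (H : SimpleGraph V) (W : Type*) : SimpleGraph (V ⊕ W) :=
  SimpleGraph.fromRel (fun x y =>
    (∃ u v, x = Sum.inl u ∧ y = Sum.inl v ∧ H.Adj u v) ∨
    (∃ u j, x = Sum.inl u ∧ y = Sum.inr j))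

/-- A graph `H` is a cycle of length `k` (possibly together with isolated vertices). -/
def IsCycleGraphOn {V : Type*} (k : ℕ) (H : SimpleGraph V) : Prop :=
  ∃ c : ZMod k → V, Function.Injective c ∧
    H.edgeSet = {e | ∃ i : ZMod k, e = s(c i, c (i + 1))}

section Aux

lemma plusW_adj_ll {V W : Type*} (H : SimpleGraph V) (u v : V) :
    (plusW H W).Adj (Sum.inl u) (Sum.inl v) ↔ H.Adj u v := by
  constructor
  · rintro ⟨hne, h | h⟩ <;>
      rcases h with ⟨a, b, ha, hb, hab⟩ | ⟨a, b, ha, hb⟩ <;> simp_all [SimpleGraph.adj_comm]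
  · intro h
    exact ⟨by simpa using h.ne, Or.inl (Or.inl ⟨u, v, rfl, rfl, h⟩)⟩

lemma plusW_adj_lr {V W : Type*} (H : SimpleGraph V) (u : V) (j : W) :
    (plusW H W).Adj (Sum.inl u) (Sum.inr j) := by
  exact ⟨by simp, Or.inl (Or.inr ⟨u, j, rfl, rfl⟩)⟩

lemma plusW_adj_rr {V W : Type*} (H : SimpleGraph V) (i j : W) :
    ¬ (plusW H W).Adj (Sum.inr i) (Sum.inr j) := by
  rintro ⟨hne, h | h⟩ <;> rcases h with ⟨a, b, ha, hb, hab⟩ | ⟨a, b, ha, hb⟩ <;> simp_all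

/-- index pattern along the cycle -/
def s9A (e r : ℕ) : ℕ := if r = 0 then 0 else if r = e then 1 else r + 1

/-- the `m`-th old vertex of the `i`-th new cycle, `m ∈ [0, ℓ]` -/
def s9g (k : ℕ) (c d : ZMod k → Fin (2*k)) (e : ℕ) (i : ZMod k) (m : ℕ) : Fin (2*k) :=
  if m % 2 = 0 then c ((s9A e (m/2) : ZMod k) + i) else d (((m/2 : ℕ) : ZMod k) + i)

def s9w (ℓ : ℕ) (hl : 0 < ℓ) (q : ℕ) : Fin ℓ := ⟨q % ℓ, Nat.mod_lt _ hl⟩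

/-- the vertex at position `t` of the `i`-th new cycle -/
def s9f (k ℓ : ℕ) (hl : 0 < ℓ) (c d : ZMod k → Fin (2*k)) (e : ℕ) (i t : ZMod k) :
    Fin (2*k) ⊕ Fin ℓ :=
  if t.val % 2 = 1 then Sum.inr (s9w ℓ hl (t.val / 2))
  else Sum.inl (s9g k c d e i (t.val/2))

variable {k ℓ e : ℕ} (hkl : k = 2*ℓ+1) (hle : ℓ = 2*e) (he : 1 ≤ e)
  {c d : ZMod k → Fin (2*k)} (hc : Function.Injective c) (hd : Function.Injective d)
  (hcd : ∀ x, x ∈ Set.range c ↔ x ∉ Set.range d)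

-- basic numeric facts
include hkl hle he

lemma s9k5 : 5 ≤ k := by omega

omit hkl hle he

include hle he in
lemma s9A_lt (r : ℕ) (hr : r ≤ e) : s9A e r ≤ e := by
  unfold s9A; split_ifs <;> omega

include hle he in
lemma s9A_inj (r r' : ℕ) (hr : r ≤ e) (hr' : r' ≤ e) (h : s9A e r = s9A e r') : r = r' := by
  unfold s9A at h; split_ifs at h <;> omega

include hkl in
lemma s9cast_inj (a b : ℕ) (ha : a < k) (hb : b < k) (h : (a : ZMod k) = b) : a = b := by
  haveI : NeZero k := ⟨by omega⟩
  have := congrArg ZMod.val h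
  rwa [ZMod.val_cast_of_lt ha, ZMod.val_cast_of_lt hb] at this

include hcd in
lemma s9g_mod (i j : ZMod k) (m m' : ℕ) (h : s9g k c d e i m = s9g k c d e j m') :
    m % 2 = m' % 2 := by
  unfold s9g at h
  split_ifs at h with h1 h2 h2
  · omega
  · exact absurd ⟨_, h.symm⟩ ((hcd _).mp ⟨_, rfl⟩)
  · exact absurd ⟨_, rfl⟩ ((hcd _).mp ⟨_, h.symm⟩)
  · omega

include hc hd in
lemma s9g_inj_i (i j : ZMod k) (m : ℕ) (h : s9g k c d e i m = s9g k c d e j m) : i = j := by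
  unfold s9g at h
  split_ifs at h with h1
  · exact add_left_cancel (hc h)
  · exact add_left_cancel (hd h)

include hkl hle he hc hd hcd in
lemma s9g_inj_m (i : ZMod k) (m m' : ℕ) (hm : m ≤ ℓ) (hm' : m' ≤ ℓ)
    (h : s9g k c d e i m = s9g k c d e i m') : m = m' := by
  have hmod := s9g_mod hcd i i m m' h
  unfold s9g at h
  split_ifs at h with h1 h2 h2
  · have := add_right_cancel (hc h)
    have hA := s9cast_inj hkl _ _ (by have := s9A_lt hle he (m/2) (by omega); omega)
      (by have := s9A_lt hle he (m'/2) (by omega); omega) this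
    have := s9A_inj hle he (m/2) (m'/2) (by omega) (by omega) hA
    omega
  · omega
  · omega
  · have := add_right_cancel (hd h)
    have := s9cast_inj hkl _ _ (by omega) (by omega) this
    omega

include hkl hle he hc hd hcd in
lemma s9f_inj (hl : 0 < ℓ) (i : ZMod k) : Function.Injective (s9f k ℓ hl c d e i) := by
  haveI : NeZero k := ⟨by omega⟩
  intro t t' h
  have ht : t.val < k := ZMod.val_lt t
  have ht' : t'.val < k := ZMod.val_lt t'
  apply ZMod.val_injective
  unfold s9f at h
  split_ifs at h with h1 h2 h2
  · have := congrArg Fin.val (Sum.inr.inj h)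
    simp only [s9w] at this
    rw [Nat.mod_eq_of_lt (by omega), Nat.mod_eq_of_lt (by omega)] at this
    omega
  all_goals try simp only [Sum.inl.injEq, reduceCtorEq] at h
  all_goals
    have := s9g_inj_m hkl hle he hc hd hcd i _ _ (by omega) (by omega) h
    omega

include hkl in
lemma s9f_cast (hl : 0 < ℓ) (i : ZMod k) (p : ℕ) (hp : p < k) :
    s9f k ℓ hl c d e i (p : ZMod k) =
      if p % 2 = 1 then Sum.inr (s9w ℓ hl (p/2)) else Sum.inl (s9g k c d e i (p/2)) := by
  haveI : NeZero k := ⟨by omega⟩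
  unfold s9f
  rw [ZMod.val_cast_of_lt hp]

lemma s9w_eq_mk (hl : 0 < ℓ) (q : ℕ) (hq : q < ℓ) : s9w ℓ hl q = ⟨q, hq⟩ :=
  Fin.ext (Nat.mod_eq_of_lt hq)

include hle he in
lemma s9g_top (i : ZMod k) : s9g k c d e i ℓ = c (1 + i) := by
  unfold s9g s9A
  rw [if_pos (by omega)]
  have h1 : ℓ / 2 = e := by omega
  rw [h1, if_neg (by omega), if_pos rfl]
  norm_num

lemma s9g_zero (i : ZMod k) : s9g k c d e i 0 = c i := by
  unfold s9g s9A
  norm_num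

include hkl hle he in
lemma s9E_iff (hl : 0 < ℓ) (i : ZMod k) (x : Sym2 (Fin (2*k) ⊕ Fin ℓ)) :
    (∃ t : ZMod k, x = s(s9f k ℓ hl c d e i t, s9f k ℓ hl c d e i (t+1))) ↔
    ((∃ j : Fin ℓ, x = s(Sum.inl (s9g k c d e i j.val), Sum.inr j) ∨
        x = s(Sum.inl (s9g k c d e i (j.val+1)), Sum.inr j)) ∨
      x = s(Sum.inl (c (1+i)), Sum.inl (c i))) := by
  haveI : NeZero k := ⟨by omega⟩
  constructor
  · rintro ⟨t, rfl⟩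
    have ht : t.val < k := ZMod.val_lt t
    have htc : ((t.val : ℕ) : ZMod k) = t := ZMod.natCast_rightInverse t
    set p := t.val with hpdef
    by_cases hp : p % 2 = 1
    · -- odd position: edge from w (p/2) to g (p/2+1)
      left
      have hq : p / 2 < ℓ := by omega
      refine ⟨⟨p/2, hq⟩, Or.inr ?_⟩
      have h1 : s9f k ℓ hl c d e i t = Sum.inr ⟨p/2, hq⟩ := by
        rw [← htc, s9f_cast hkl hl i p ht, if_pos hp, s9w_eq_mk]
      have h2 : s9f k ℓ hl c d e i (t+1) = Sum.inl (s9g k c d e i (p/2+1)) := by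
        have hh : t + 1 = ((p + 1 : ℕ) : ZMod k) := by rw [Nat.cast_add, Nat.cast_one, htc]
        rw [hh, s9f_cast hkl hl i _ (by omega), if_neg (by omega)]
        congr 1
        congr 1
        omega
      rw [h1, h2, Sym2.eq_swap]
    · by_cases hp2 : p = 2*ℓ
      · -- wrap-around edge
        right
        have h1 : s9f k ℓ hl c d e i t = Sum.inl (c (1+i)) := by
          rw [← htc, s9f_cast hkl hl i p ht, if_neg (by omega)]
          rw [show p / 2 = ℓ by omega, s9g_top hle he]
        have ht1 : t + 1 = ((0:ℕ) : ZMod k) := by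
          rw [← htc, show ((p : ℕ) : ZMod k) + 1 = ((p+1 : ℕ) : ZMod k) from by push_cast; ring,
            show p + 1 = k from by omega, ZMod.natCast_self, Nat.cast_zero]
        have h2 : s9f k ℓ hl c d e i (t + 1) = Sum.inl (c i) := by
          rw [ht1, s9f_cast hkl hl i 0 (by omega), if_neg (by omega), Nat.zero_div, s9g_zero]
        rw [h1, h2]
      · -- even position < 2ℓ
        left
        have hq : p / 2 < ℓ := by omega
        refine ⟨⟨p/2, hq⟩, Or.inl ?_⟩
        have h1 : s9f k ℓ hl c d e i t = Sum.inl (s9g k c d e i (p/2)) := by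
          rw [← htc, s9f_cast hkl hl i p ht, if_neg (by omega)]
        have h2 : s9f k ℓ hl c d e i (t+1) = Sum.inr ⟨p/2, hq⟩ := by
          have hh : t + 1 = ((p + 1 : ℕ) : ZMod k) := by rw [Nat.cast_add, Nat.cast_one, htc]
          rw [hh, s9f_cast hkl hl i _ (by omega), if_pos (by omega), s9w_eq_mk hl _ (by omega)]
          exact congrArg Sum.inr (Fin.mk_eq_mk.mpr (by omega))
        rw [h1, h2]
  · have hcast1 : ∀ a : ℕ, ((a : ℕ) : ZMod k) + 1 = ((a+1 : ℕ) : ZMod k) := by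
      intro a; push_cast; ring
    rintro (⟨j, hj | hj⟩ | hx)
    · refine ⟨((2 * j.val : ℕ) : ZMod k), ?_⟩
      have hjv : j.val < ℓ := j.isLt
      have h1 : s9f k ℓ hl c d e i ((2 * j.val : ℕ) : ZMod k) = Sum.inl (s9g k c d e i j.val) := by
        rw [s9f_cast hkl hl i _ (by omega), if_neg (by omega)]
        congr 1
        congr 1
        omega
      have h3 : s9f k ℓ hl c d e i (((2 * j.val + 1 : ℕ) : ZMod k)) = Sum.inr j := by
        rw [s9f_cast hkl hl i _ (by omega), if_pos (by omega),
          s9w_eq_mk hl _ (by omega : (2 * j.val + 1) / 2 < ℓ)]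
        congr 1
        exact Fin.ext (by simp; omega)
      rw [hj, hcast1, h1, h3]
    · refine ⟨((2 * j.val + 1 : ℕ) : ZMod k), ?_⟩
      have hjv : j.val < ℓ := j.isLt
      have h1 : s9f k ℓ hl c d e i (((2 * j.val + 1 : ℕ) : ZMod k)) = Sum.inr j := by
        rw [s9f_cast hkl hl i _ (by omega), if_pos (by omega),
          s9w_eq_mk hl _ (by omega : (2 * j.val + 1) / 2 < ℓ)]
        congr 1
        exact Fin.ext (by simp; omega)
      have h3 : s9f k ℓ hl c d e i (((2 * j.val + 1 + 1 : ℕ) : ZMod k)) =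
          Sum.inl (s9g k c d e i (j.val + 1)) := by
        rw [s9f_cast hkl hl i _ (by omega), if_neg (by omega)]
        congr 1
        congr 1
        omega
      rw [hj, hcast1, h1, h3, Sym2.eq_swap]
    · refine ⟨((2 * ℓ : ℕ) : ZMod k), ?_⟩
      have h1 : s9f k ℓ hl c d e i ((2 * ℓ : ℕ) : ZMod k) = Sum.inl (c (1+i)) := by
        rw [s9f_cast hkl hl i _ (by omega), if_neg (by omega),
          show 2 * ℓ / 2 = ℓ by omega, s9g_top hle he]
      have h2 : ((2 * ℓ : ℕ) : ZMod k) + 1 = ((0:ℕ) : ZMod k) := by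
        rw [hcast1, show 2*ℓ+1 = k from by omega, ZMod.natCast_self, Nat.cast_zero]
      have h3 : s9f k ℓ hl c d e i (((0:ℕ) : ZMod k)) = Sum.inl (c i) := by
        rw [s9f_cast hkl hl i 0 (by omega), if_neg (by omega), Nat.zero_div, s9g_zero]
      rw [hx, h2, h1, h3]

include hkl hle he in
lemma s9_one_ne_zero : (1 : ZMod k) ≠ 0 := by
  haveI : NeZero k := ⟨by omega⟩
  haveI : Fact (1 < k) := ⟨by omega⟩
  intro h
  have := congrArg ZMod.val h
  rw [ZMod.val_one, ZMod.val_zero] at this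
  omega

include hkl hle he hc hd hcd in
lemma s9_edgeSet (hl : 0 < ℓ) (i : ZMod k) :
    (SimpleGraph.fromEdgeSet
        {x | ∃ t, x = s(s9f k ℓ hl c d e i t, s9f k ℓ hl c d e i (t+1))}).edgeSet
      = {x | ∃ t, x = s(s9f k ℓ hl c d e i t, s9f k ℓ hl c d e i (t+1))} := by
  rw [edgeSet_fromEdgeSet, sdiff_eq_left]
  rw [Set.disjoint_left]
  rintro x ⟨t, rfl⟩ hd2
  rw [Sym2.mem_diagSet, Sym2.mk_isDiag_iff] at hd2
  have h3 := s9f_inj hkl hle he hc hd hcd hl i hd2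
  have h2 : t + 0 = t + 1 := by rw [add_zero]; exact h3
  exact s9_one_ne_zero hkl hle he (add_left_cancel h2).symm

include hkl hle he in
lemma s9_two_ne_zero : (2 : ZMod k) ≠ 0 := by
  haveI : NeZero k := ⟨by omega⟩
  intro h
  have h2 : ((2 : ℕ) : ZMod k) = ((0 : ℕ) : ZMod k) := by push_cast; exact h
  have := s9cast_inj hkl 2 0 (by omega) (by omega) h2
  omega

include hkl hle he hc hd hcd in
lemma s9_disj (i j : ZMod k) (x : Sym2 (Fin (2*k) ⊕ Fin ℓ))
    (hxi : (∃ q : Fin ℓ, x = s(Sum.inl (s9g k c d e i q.val), Sum.inr q) ∨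
        x = s(Sum.inl (s9g k c d e i (q.val+1)), Sum.inr q)) ∨
      x = s(Sum.inl (c (1+i)), Sum.inl (c i)))
    (hxj : (∃ q : Fin ℓ, x = s(Sum.inl (s9g k c d e j q.val), Sum.inr q) ∨
        x = s(Sum.inl (s9g k c d e j (q.val+1)), Sum.inr q)) ∨
      x = s(Sum.inl (c (1+j)), Sum.inl (c j))) : i = j := by
  rcases hxi with ⟨q1, rfl | rfl⟩ | rfl <;>
    rcases hxj with ⟨q2, h2 | h2⟩ | h2 <;>
    simp only [Sym2.eq_iff, Sum.inl.injEq, Sum.inr.injEq, reduceCtorEq, false_and, and_false,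
      or_false, false_or] at h2
  · obtain ⟨hg, hq⟩ := h2
    cases hq
    exact s9g_inj_i hc hd _ _ _ hg
  · obtain ⟨hg, hq⟩ := h2
    cases hq
    have := s9g_mod hcd _ _ _ _ hg
    omega
  · obtain ⟨hg, hq⟩ := h2
    cases hq
    have := s9g_mod hcd _ _ _ _ hg
    omega
  · obtain ⟨hg, hq⟩ := h2
    cases hq
    exact s9g_inj_i hc hd _ _ _ hg
  · rcases h2 with ⟨hg1, hg2⟩ | ⟨hg1, hg2⟩
    · exact add_left_cancel (hc hg1)
    · exfalso
      have e1 : 1 + i = j := hc hg1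
      have e2 : i = 1 + j := hc hg2
      apply s9_two_ne_zero hkl hle he
      have h3 : i + 0 = i + 2 := by
        rw [add_zero]
        nth_rewrite 1 [e2]
        rw [← e1]
        ring
      exact (add_left_cancel h3).symm

include hkl hle he hc hd hcd in
lemma s9_cover_lr (u : Fin (2*k)) (q : Fin ℓ) :
    ∃ i : ZMod k,
      ((∃ j : Fin ℓ, s(Sum.inl u, Sum.inr q) = s(Sum.inl (s9g k c d e i j.val), Sum.inr j) ∨
          s(Sum.inl u, Sum.inr q)
            = s(Sum.inl (s9g k c d e i (j.val+1)), Sum.inr j)) ∨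
        (s(Sum.inl u, Sum.inr q) : Sym2 (Fin (2*k) ⊕ Fin ℓ))
          = s(Sum.inl (c (1+i)), Sum.inl (c i))) := by
  have key : ∀ a b : ZMod k, a + (b - a) = b := fun a b => by ring
  rcases em (u ∈ Set.range c) with ⟨v, rfl⟩ | hu
  · by_cases hq : q.val % 2 = 0
    · refine ⟨v - (s9A e (q.val/2) : ZMod k), Or.inl ⟨q, Or.inl ?_⟩⟩
      unfold s9g
      rw [if_pos hq, key]
    · refine ⟨v - (s9A e ((q.val+1)/2) : ZMod k), Or.inl ⟨q, Or.inr ?_⟩⟩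
      unfold s9g
      rw [if_pos (by omega), key]
  · have hu' : u ∈ Set.range d := by
      by_contra h'
      exact hu ((hcd u).mpr h')
    obtain ⟨v, rfl⟩ := hu'
    by_cases hq : q.val % 2 = 0
    · refine ⟨v - (((q.val+1)/2 : ℕ) : ZMod k), Or.inl ⟨q, Or.inr ?_⟩⟩
      unfold s9g
      rw [if_neg (by omega), key]
    · refine ⟨v - ((q.val/2 : ℕ) : ZMod k), Or.inl ⟨q, Or.inl ?_⟩⟩
      unfold s9g
      rw [if_neg hq, key]

include hkl hle he hc hd hcd in
theorem s9main (hl : 0 < ℓ) (Γ : SimpleGraph (Fin (2 * k)))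
    (hce : Γ.edgeSet = {x | ∃ i : ZMod k, x = s(c i, c (i + 1))}) :
    ∃ C : Fin k → SimpleGraph (Fin (2 * k) ⊕ Fin ℓ),
      (∀ i, IsCycleGraphOn k (C i)) ∧
      (Pairwise fun i j => Disjoint (C i).edgeSet (C j).edgeSet) ∧
      (⋃ i, (C i).edgeSet) = (plusW Γ (Fin ℓ)).edgeSet ∧
      (∀ i, ∃! x, x ∈ (C i).edgeSet ∧
        x ∈ (Γ.map Sum.inl).edgeSet) := by
  haveI : NeZero k := ⟨by omega⟩
  refine ⟨fun i => SimpleGraph.fromEdgeSet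
      {x | ∃ t, x = s(s9f k ℓ hl c d e (i.val : ZMod k) t,
            s9f k ℓ hl c d e (i.val : ZMod k) (t+1))}, ?_, ?_, ?_, ?_⟩
  · intro i
    exact ⟨s9f k ℓ hl c d e (i.val : ZMod k), s9f_inj hkl hle he hc hd hcd hl _,
      s9_edgeSet hkl hle he hc hd hcd hl _⟩
  · intro i j hij
    rw [Set.disjoint_left]
    intro x hxi hxj
    rw [s9_edgeSet hkl hle he hc hd hcd hl] at hxi hxj
    have h1 := (s9E_iff hkl hle he hl _ x).mp hxi
    have h2 := (s9E_iff hkl hle he hl _ x).mp hxj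
    have h3 := s9_disj hkl hle he hc hd hcd _ _ x h1 h2
    exact hij (Fin.ext (s9cast_inj hkl _ _ i.isLt j.isLt h3))
  · apply Set.Subset.antisymm
    · intro x hx
      rw [Set.mem_iUnion] at hx
      obtain ⟨i, hxi⟩ := hx
      rw [s9_edgeSet hkl hle he hc hd hcd hl] at hxi
      rcases (s9E_iff hkl hle he hl _ x).mp hxi with ⟨q, rfl | rfl⟩ | rfl
      · exact (SimpleGraph.mem_edgeSet _).mpr (plusW_adj_lr Γ _ _)
      · exact (SimpleGraph.mem_edgeSet _).mpr (plusW_adj_lr Γ _ _)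
      · refine (SimpleGraph.mem_edgeSet _).mpr ((plusW_adj_ll Γ _ _).mpr ?_)
        have hmem : s(c ((i.val : ZMod k)), c ((i.val : ZMod k)+1)) ∈ Γ.edgeSet := by
          rw [hce]; exact ⟨_, rfl⟩
        have hadj := (SimpleGraph.mem_edgeSet _).mp hmem
        rw [add_comm 1 ((i.val : ZMod k))]
        exact hadj.symm
    · intro x hx
      induction x using Sym2.ind with
      | _ a b =>
        rw [SimpleGraph.mem_edgeSet] at hx
        rw [Set.mem_iUnion]
        rcases a with u | qa <;> rcases b with v | qb
        · have hadj := (plusW_adj_ll Γ u v).mp hx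
          have hmem : s(u, v) ∈ Γ.edgeSet := hadj
          rw [hce] at hmem
          obtain ⟨t, hst⟩ := hmem
          refine ⟨⟨t.val, ZMod.val_lt t⟩, ?_⟩
          rw [s9_edgeSet hkl hle he hc hd hcd hl]
          apply (s9E_iff hkl hle he hl _ _).mpr
          right
          have htt : (((⟨t.val, ZMod.val_lt t⟩ : Fin k).val : ℕ) : ZMod k) = t :=
            ZMod.natCast_rightInverse t
          rw [htt]
          rw [Sym2.eq_iff] at hst
          rcases hst with ⟨rfl, rfl⟩ | ⟨rfl, rfl⟩
          · rw [add_comm 1 t]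
            exact Sym2.eq_swap.symm
          · rw [add_comm 1 t]
        · obtain ⟨i', hi'⟩ := s9_cover_lr hkl hle he hc hd hcd u qb
          refine ⟨⟨i'.val, ZMod.val_lt i'⟩, ?_⟩
          rw [s9_edgeSet hkl hle he hc hd hcd hl]
          apply (s9E_iff hkl hle he hl _ _).mpr
          rw [show (((⟨i'.val, ZMod.val_lt i'⟩ : Fin k).val : ℕ) : ZMod k) = i' from
            ZMod.natCast_rightInverse i']
          exact hi'
        · rw [Sym2.eq_swap]
          obtain ⟨i', hi'⟩ := s9_cover_lr hkl hle he hc hd hcd v qa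
          refine ⟨⟨i'.val, ZMod.val_lt i'⟩, ?_⟩
          rw [s9_edgeSet hkl hle he hc hd hcd hl]
          apply (s9E_iff hkl hle he hl _ _).mpr
          rw [show (((⟨i'.val, ZMod.val_lt i'⟩ : Fin k).val : ℕ) : ZMod k) = i' from
            ZMod.natCast_rightInverse i']
          exact hi'
        · exact absurd hx (plusW_adj_rr Γ _ _)
  · intro i
    refine ⟨s(Sum.inl (c (1+(i.val : ZMod k))), Sum.inl (c (i.val : ZMod k))), ⟨?_, ?_⟩, ?_⟩
    · rw [s9_edgeSet hkl hle he hc hd hcd hl]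
      exact (s9E_iff hkl hle he hl _ _).mpr (Or.inr rfl)
    · apply (SimpleGraph.mem_edgeSet _).mpr
      refine (SimpleGraph.map_adj ⟨Sum.inl, Sum.inl_injective⟩ Γ _ _).mpr ?_
      refine ⟨c (1+(i.val : ZMod k)), c (i.val : ZMod k), ?_, rfl, rfl⟩
      have hmem : s(c ((i.val : ZMod k)), c ((i.val : ZMod k)+1)) ∈ Γ.edgeSet := by
        rw [hce]; exact ⟨_, rfl⟩
      have hadj := (SimpleGraph.mem_edgeSet _).mp hmem
      rw [add_comm 1 ((i.val : ZMod k))]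
      exact hadj.symm
    · rintro x ⟨hx1, hx2⟩
      rw [s9_edgeSet hkl hle he hc hd hcd hl] at hx1
      rcases (s9E_iff hkl hle he hl _ x).mp hx1 with ⟨q, rfl | rfl⟩ | rfl
      · exfalso
        have := ((SimpleGraph.mem_edgeSet _).mp hx2)
        have := (SimpleGraph.map_adj ⟨Sum.inl, Sum.inl_injective⟩ Γ _ _).mp this
        obtain ⟨u', v', -, -, hv⟩ := this
        exact absurd hv (by simp)
      · exfalso
        have := ((SimpleGraph.mem_edgeSet _).mp hx2)
        have := (SimpleGraph.map_adj ⟨Sum.inl, Sum.inl_injective⟩ Γ _ _).mp this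
        obtain ⟨u', v', -, -, hv⟩ := this
        exact absurd hv (by simp)
      · rfl


end Aux

theorem stmt9 (k : ℕ) (hk3 : 3 ≤ k) (hk : Odd k) (hl : Even ((k - 1) / 2))
    (Γ : SimpleGraph (Fin (2 * k))) (hΓ : IsCycleGraphOn k Γ) :
    ∃ C : Fin k → SimpleGraph (Fin (2 * k) ⊕ Fin ((k - 1) / 2)),
      (∀ i, IsCycleGraphOn k (C i)) ∧
      (Pairwise fun i j => Disjoint (C i).edgeSet (C j).edgeSet) ∧
      (⋃ i, (C i).edgeSet) = (plusW Γ (Fin ((k - 1) / 2))).edgeSet ∧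
      (∀ i, ∃! e, e ∈ (C i).edgeSet ∧
        e ∈ (Γ.map Sum.inl).edgeSet) := by
  classical
  obtain ⟨c, hc, hce⟩ := hΓ
  obtain ⟨m, hm⟩ := hk
  obtain ⟨e0, he0⟩ := hl
  have hkl : k = 2 * ((k-1)/2) + 1 := by omega
  have hle : (k-1)/2 = 2 * e0 := by omega
  have he : 1 ≤ e0 := by omega
  haveI : NeZero k := ⟨by omega⟩
  haveI : Fintype ((Set.range c)ᶜ : Set (Fin (2*k))) := Fintype.ofFinite _
  haveI : Fintype ((Set.range c) : Set (Fin (2*k))) := Fintype.ofFinite _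
  have hcard : Fintype.card (ZMod k) = Fintype.card ((Set.range c)ᶜ : Set (Fin (2*k))) := by
    rw [ZMod.card, Fintype.card_compl_set, Set.card_range_of_injective hc, ZMod.card,
      Fintype.card_fin]
    omega
  obtain ⟨eqv⟩ : Nonempty (ZMod k ≃ ((Set.range c)ᶜ : Set (Fin (2*k)))) :=
    ⟨Fintype.equivOfCardEq hcard⟩
  set d : ZMod k → Fin (2*k) := fun s => (eqv s : Fin (2*k)) with hddef
  have hd : Function.Injective d := fun a b h => eqv.injective (Subtype.ext h)
  have hrange : Set.range d = (Set.range c)ᶜ := by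
    ext x
    constructor
    · rintro ⟨s, rfl⟩
      exact (eqv s).2
    · intro hx
      exact ⟨eqv.symm ⟨x, hx⟩, by simp [hddef]⟩
  have hcd : ∀ x, x ∈ Set.range c ↔ x ∉ Set.range d := by
    intro x
    rw [hrange]
    simp
  exact s9main hkl hle he hc hd hcd (by omega) Γ hce
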